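/- Let 𝔉 be a saturated formation, G a finite group, N a normal subgroup of G, and U a subgroup of G such that U ∈ 𝔉 and NU = G. Then Z := U ∩ C_G(N) is a normal subgroup of G and Z ≤ Z_𝔉(G). -/

import Mathlib

/-- A class of finite groups. -/
def GroupClass : Type 1 :=
  ∀ (G : Type) [Group G] [Finite G], Prop

instance SemidirectProduct.instFinite {N G : Type*} [Group N] [Group G] [Finite N] [Finite G]
    (φ : G →* MulAut N) : Finite (N ⋊[φ] G) :=
  Finite.of_injective (fun x => (x.left, x.right)) (by
    rintro ⟨a, b⟩ ⟨c, d⟩ h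
    simpa [Prod.ext_iff, SemidirectProduct.ext_iff] using h)

/-- The `F`-residual of a finite group `G`. -/
def GroupClass.residual (F : GroupClass) (G : Type) [Group G] [Finite G] : Subgroup G :=
  sInf {N : Subgroup G | ∃ _ : N.Normal, F (G ⧸ N)}

/-- `F` is a formation. -/
structure GroupClass.IsFormation (F : GroupClass) : Prop where
  nonempty : ∃ (G : Type) (_ : Group G) (_ : Finite G), F G
  isoClosed : ∀ (G H : Type) [Group G] [Finite G] [Group H] [Finite H],
    (G ≃* H) → F G → F H
  quot_residual_mem : ∀ (G : Type) [Group G] [Finite G] (N : Subgroup G) (_ : N.Normal),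
    F.residual G ≤ N → F (G ⧸ N)

/-- `F` is hereditary (subgroup-closed). -/
def GroupClass.Hereditary (F : GroupClass) : Prop :=
  ∀ (G : Type) [Group G] [Finite G], F G → ∀ H : Subgroup G, F H

/-- `F` is saturated. -/
def GroupClass.Saturated (F : GroupClass) : Prop :=
  ∀ (G : Type) [Group G] [Finite G], F.residual G ≤ frattini G → F G

section SectionMachinery

variable {G : Type} [Group G]

/-- conjugation by `g` preserves `S.subgroupOf R` when `R, S` are normal. -/
theorem conj_map_subgroupOf (R S : Subgroup G) [hR : R.Normal] [hS : S.Normal] (g : G) :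
    (S.subgroupOf R).map ((MulAut.conjNormal g : MulAut R) : R →* R) = S.subgroupOf R := by
  ext x
  simp only [Subgroup.mem_map, Subgroup.mem_subgroupOf]
  constructor
  · rintro ⟨y, hy, rfl⟩
    simpa [MulAut.conjNormal_apply] using hS.conj_mem _ hy g
  · intro hx
    refine ⟨(MulAut.conjNormal g).symm x, ?_, by simp⟩
    simp only [Subgroup.mem_subgroupOf, MulAut.conjNormal_symm_apply]
    simpa using hS.conj_mem _ hx g⁻¹

/-- The conjugation action of `G` on the normal section `R/S`. -/
def secAction (R S : Subgroup G) [R.Normal] [S.Normal] :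
    G →* MulAut (R ⧸ S.subgroupOf R) where
  toFun g := QuotientGroup.congr (S.subgroupOf R) (S.subgroupOf R)
      (MulAut.conjNormal g) (conj_map_subgroupOf R S g)
  map_one' := by
    ext x
    induction x using QuotientGroup.induction_on with
    | H r => simp [QuotientGroup.congr_mk]
  map_mul' g₁ g₂ := by
    ext x
    induction x using QuotientGroup.induction_on with
    | H r => simp [QuotientGroup.congr_mk, map_mul]

/-- The centraliser in `G` of the normal section `R/S`. -/
def secCentralizer (R S : Subgroup G) [R.Normal] [S.Normal] : Subgroup G :=
  (secAction R S).ker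

instance secCentralizer.normal (R S : Subgroup G) [R.Normal] [S.Normal] :
    (secCentralizer R S).Normal := MonoidHom.normal_ker _

/-- The semidirect product `[R/S](G/K)` for a normal subgroup `K ≤ C_G(R/S)`. -/
abbrev secSDP (R S K : Subgroup G) [R.Normal] [S.Normal] [K.Normal]
    (hK : K ≤ secCentralizer R S) : Type :=
  (R ⧸ S.subgroupOf R) ⋊[QuotientGroup.lift K (secAction R S) (fun _ hx => hK hx)] (G ⧸ K)

end SectionMachinery

/-- The normal section `R/S` of `G` is `F`-central in `G`. -/
def FCentralSection (F : GroupClass) {G : Type} [Group G] [Finite G]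
    (R S : Subgroup G) [R.Normal] [S.Normal] : Prop :=
  ∃ (K : Subgroup G) (hK : K.Normal),
    haveI := hK
    ∃ hle : K ≤ secCentralizer R S, F (secSDP R S K hle)

/-- `H/K` is a chief factor of `G`. -/
def IsChiefFactor {G : Type} [Group G] (H K : Subgroup G) : Prop :=
  H.Normal ∧ K.Normal ∧ K < H ∧
    ∀ L : Subgroup G, L.Normal → K ≤ L → L ≤ H → L = K ∨ L = H

/-- A normal subgroup `N` of `G` is `F`-hypercentral in `G`:
every chief factor of `G` below `N` is `F`-central in `G`. -/
def FHypercentralIn (F : GroupClass) {G : Type} [Group G] [Finite G] (N : Subgroup G) : Prop :=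
  N.Normal ∧ ∀ H K : Subgroup G, ∀ hcf : IsChiefFactor H K, H ≤ N →
    @FCentralSection F G _ _ H K hcf.1 hcf.2.1

/-- The `F`-hypercentre of `G`: the product of all `F`-hypercentral normal subgroups. -/
def FHypercentre (F : GroupClass) (G : Type) [Group G] [Finite G] : Subgroup G :=
  ⨆ (N : Subgroup G) (_ : FHypercentralIn F N), N

/-- `A` is `K`-`F`-subnormal in `G`. -/
def KFSubnormalIn (F : GroupClass) {G : Type} [Group G] [Finite G] (A : Subgroup G) : Prop :=
  ∃ (n : ℕ) (c : ℕ → Subgroup G), c 0 = A ∧ c n = ⊤ ∧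
    ∀ i < n, c i ≤ c (i + 1) ∧
      (((c i).subgroupOf (c (i + 1))).Normal ∨
        F ((c (i + 1)) ⧸ ((c i).subgroupOf (c (i + 1))).normalCore))


/-! ### Auxiliary lemmas -/

section FormationLemmas

variable {F : GroupClass}

theorem GroupClass.residual_le_bot (hF : F.IsFormation) {G : Type} [Group G] [Finite G] (hG : F G) :
    F.residual G ≤ ⊥ := by
  apply sInf_le
  exact ⟨inferInstance, hF.isoClosed G (G ⧸ (⊥ : Subgroup G))
    (QuotientGroup.quotientBot (G := G)).symm hG⟩

theorem GroupClass.quot_mem (hF : F.IsFormation) {G : Type} [Group G] [Finite G] (hG : F G)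
    (N : Subgroup G) [N.Normal] : F (G ⧸ N) :=
  hF.quot_residual_mem G N ‹_› (le_trans (GroupClass.residual_le_bot hF hG) bot_le)

theorem GroupClass.surj_mem (hF : F.IsFormation) {G H : Type} [Group G] [Finite G] [Group H] [Finite H]
    (f : G →* H) (hf : Function.Surjective f) (hG : F G) : F H :=
  hF.isoClosed _ _ (QuotientGroup.quotientKerEquivOfSurjective f hf)
    (GroupClass.quot_mem hF hG f.ker)

theorem GroupClass.subdirect_mem (hF : F.IsFormation) {T : Type} [Group T] [Finite T]
    (A B : Subgroup T) [A.Normal] [B.Normal] (hAB : A ⊓ B = ⊥)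
    (hA : F (T ⧸ A)) (hB : F (T ⧸ B)) : F T := by
  have h1 : F.residual T ≤ A := sInf_le ⟨‹_›, hA⟩
  have h2 : F.residual T ≤ B := sInf_le ⟨‹_›, hB⟩
  have hbot : F (T ⧸ (⊥ : Subgroup T)) :=
    hF.quot_residual_mem T ⊥ inferInstance (by rw [← hAB]; exact le_inf h1 h2)
  exact hF.isoClosed _ _ QuotientGroup.quotientBot hbot

/-- If `X ∈ F` acts on `M` and there is an injective equivariant hom `ι : M →* X`,
then `M ⋊ X ∈ F`. -/
theorem GroupClass.sdp_mem (hF : F.IsFormation) {M X : Type} [Group M] [Finite M] [Group X] [Finite X]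
    (φ : X →* MulAut M) (ι : M →* X) (hinj : Function.Injective ι)
    (heq : ∀ (x : X) (m : M), ι (φ x m) = x * ι m * x⁻¹) (hX : F X) :
    F (M ⋊[φ] X) := by
  let f : M ⋊[φ] X →* X := SemidirectProduct.lift ι (MonoidHom.id X) (by
    intro x; ext m
    simp [heq, MulAut.conj_apply])
  have hfs : Function.Surjective f := by
    intro x
    exact ⟨SemidirectProduct.inr x, by simp [f]⟩
  have hrs : Function.Surjective (SemidirectProduct.rightHom : M ⋊[φ] X →* X) :=
    SemidirectProduct.rightHom_surjective
  refine GroupClass.subdirect_mem hF f.ker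
    (SemidirectProduct.rightHom : M ⋊[φ] X →* X).ker ?_ ?_ ?_
  · rw [eq_bot_iff]
    intro x hx
    rw [Subgroup.mem_inf] at hx
    obtain ⟨hx1, hx2⟩ := hx
    rw [MonoidHom.mem_ker] at hx1 hx2
    rw [SemidirectProduct.rightHom_eq_right] at hx2
    have hxl : x = SemidirectProduct.inl x.left := by
      rw [← SemidirectProduct.inl_left_mul_inr_right x, hx2]
      simp
    rw [hxl] at hx1
    simp only [f, SemidirectProduct.lift_inl] at hx1
    have : x.left = 1 := hinj (by rw [hx1, map_one])
    rw [hxl, this, map_one]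
    rfl
  · exact hF.isoClosed _ _ (QuotientGroup.quotientKerEquivOfSurjective f hfs).symm hX
  · exact hF.isoClosed _ _
      (QuotientGroup.quotientKerEquivOfSurjective _ hrs).symm hX

end FormationLemmas

section SecLemmas

variable {G : Type} [Group G]

theorem mem_secCentralizer_of (R S : Subgroup G) [R.Normal] [S.Normal] (g : G)
    (h : ∀ r : G, r ∈ R → g * r * g⁻¹ * r⁻¹ ∈ S) : g ∈ secCentralizer R S := by
  rw [secCentralizer, MonoidHom.mem_ker]
  apply MulEquiv.ext
  intro x
  induction x using QuotientGroup.induction_on with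
  | H r =>
    show (secAction R S g) (QuotientGroup.mk r) = QuotientGroup.mk r
    rw [show (secAction R S g) (QuotientGroup.mk r)
        = QuotientGroup.mk (MulAut.conjNormal g r) from
      QuotientGroup.congr_mk _ _ _ (conj_map_subgroupOf R S g) r]
    rw [QuotientGroup.eq]
    rw [Subgroup.mem_subgroupOf]
    have : (((MulAut.conjNormal g r)⁻¹ * r : R) : G) = g * (↑r)⁻¹ * g⁻¹ * ((↑r)⁻¹)⁻¹ := by
      push_cast [MulAut.conjNormal_apply]
      group
    rw [this]
    exact h _ (inv_mem r.2)

theorem secAction_eq_one_of_mem {R S : Subgroup G} [R.Normal] [S.Normal] {g : G}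
    (hg : g ∈ secCentralizer R S) : secAction R S g = 1 := by
  rwa [secCentralizer, MonoidHom.mem_ker] at hg

end SecLemmas

/-- **Lemma 6(ii).** Let `𝔉` be a saturated formation, `N` a normal subgroup of the
finite group `G`, and `U ∈ 𝔉` a subgroup with `NU = G`. Then `Z := U ∩ C_G(N)` is a
normal subgroup of `G` and `Z ≤ Z_𝔉(G)`. -/
theorem inf_centralizer_normal_and_le_FHypercentre
    (F : GroupClass) (hF : F.IsFormation) (hSat : F.Saturated)
    {G : Type} [Group G] [Finite G] (N U : Subgroup G) [N.Normal]
    (hU : F U) (hNU : N ⊔ U = ⊤) :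
    (U ⊓ Subgroup.centralizer (N : Set G)).Normal ∧
      U ⊓ Subgroup.centralizer (N : Set G) ≤ FHypercentre F G := by
  set Z := U ⊓ Subgroup.centralizer (N : Set G) with hZdef
  -- elements of Z commute with elements of N
  have hcommZ : ∀ z ∈ Z, ∀ n ∈ N, n * z = z * n := by
    intro z hz n hn
    exact (Subgroup.mem_centralizer_iff.mp hz.2) n hn
  -- every g ∈ G can be written u * n with u ∈ U, n ∈ N
  have hdecomp : ∀ g : G, ∃ u ∈ U, ∃ n ∈ N, g = u * n := by
    intro g
    have hg : g ∈ ((U ⊔ N : Subgroup G) : Set G) := by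
      rw [sup_comm, hNU]; trivial
    rw [Subgroup.mul_normal] at hg
    obtain ⟨u, hu, n, hn, rfl⟩ := hg
    exact ⟨u, hu, n, hn, rfl⟩
  -- Z is normal
  have hZnormal : Z.Normal := by
    constructor
    intro z hz g
    obtain ⟨u, hu, n, hn, rfl⟩ := hdecomp g
    have h1 : n * z * n⁻¹ = z := by
      rw [hcommZ z hz n hn]; group
    have h2 : u * n * z * (u * n)⁻¹ = u * z * u⁻¹ := by
      rw [mul_inv_rev, show u * n * z * (n⁻¹ * u⁻¹) = u * (n * z * n⁻¹) * u⁻¹ by group, h1]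
    rw [h2]
    refine ⟨U.mul_mem (U.mul_mem hu hz.1) (U.inv_mem hu),
      Subgroup.mem_centralizer_iff.mpr ?_⟩
    intro m hm
    have hm' : u⁻¹ * m * u ∈ N := by
      have := ‹N.Normal›.conj_mem m hm u⁻¹
      simpa [mul_assoc] using this
    have := hcommZ z hz _ hm'
    calc m * (u * z * u⁻¹) = u * ((u⁻¹ * m * u) * z) * u⁻¹ := by group
      _ = u * (z * (u⁻¹ * m * u)) * u⁻¹ := by rw [this]
      _ = u * z * u⁻¹ * m := by group
  refine ⟨hZnormal, ?_⟩
  -- it suffices that Z is F-hypercentral in G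
  have hmain : FHypercentralIn F Z := by
    refine ⟨hZnormal, ?_⟩
    intro H K hcf hHZ
    haveI hHn : H.Normal := hcf.1
    haveI hKn : K.Normal := hcf.2.1
    have hKH : K < H := hcf.2.2.1
    have hchief := hcf.2.2.2
    set C := secCentralizer H K with hCdef
    have hHU : H ≤ U := le_trans hHZ inf_le_left
    -- K ≤ C
    have hKC : K ≤ C := by
      intro k hk
      apply mem_secCentralizer_of
      intro r hr
      have h1 : k * r * k⁻¹ * r⁻¹ = k * (r * k⁻¹ * r⁻¹) := by group
      rw [h1]
      exact K.mul_mem hk (‹K.Normal›.conj_mem k⁻¹ (K.inv_mem hk) r)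
    -- N ≤ C
    have hNC : N ≤ C := by
      intro n hn
      apply mem_secCentralizer_of
      intro r hr
      have hnr : n * r = r * n := hcommZ r (hHZ hr) n hn
      have h1 : n * r * n⁻¹ * r⁻¹ = 1 := by rw [hnr]; group
      rw [h1]
      exact K.one_mem
    -- G ⧸ C is an image of U
    have hsurjU : Function.Surjective ((QuotientGroup.mk' C).comp U.subtype) := by
      intro x
      induction x using QuotientGroup.induction_on with
      | H g =>
        obtain ⟨u, hu, n, hn, rfl⟩ := hdecomp g
        refine ⟨⟨u, hu⟩, ?_⟩
        show QuotientGroup.mk u = QuotientGroup.mk (u * n)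
        rw [QuotientGroup.eq]
        have : u⁻¹ * (u * n) = n := by group
        rw [this]
        exact hNC hn
    have hGC : F (G ⧸ C) := GroupClass.surj_mem hF _ hsurjU hU
    -- provide the witness C for F-centrality
    refine ⟨C, inferInstance, le_rfl, ?_⟩
    by_cases hHC : H ≤ C
    · -- "abelian" case : H centralizes H/K; go through U ⧸ K
      haveI hKqn : (K.subgroupOf U).Normal := hKn.subgroupOf U
      haveI hKHn : (K.subgroupOf H).Normal := hKn.subgroupOf H
      -- the action of U ⧸ K on H ⧸ K
      have hαker : K.subgroupOf U ≤ ((secAction H K).comp U.subtype).ker := by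
        intro u hu
        rw [MonoidHom.mem_ker]
        show secAction H K (u : G) = 1
        exact secAction_eq_one_of_mem (hKC (Subgroup.mem_subgroupOf.mp hu))
      set α : U ⧸ K.subgroupOf U →* MulAut (H ⧸ K.subgroupOf H) :=
        QuotientGroup.lift (K.subgroupOf U) ((secAction H K).comp U.subtype) hαker with hαdef
      -- the embedding H ⧸ K →* U ⧸ K
      have hcond1 : K.subgroupOf H ≤ Subgroup.comap (Subgroup.inclusion hHU) (K.subgroupOf U) := by
        intro r hr
        simp only [Subgroup.mem_comap, Subgroup.mem_subgroupOf] at hr ⊢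
        exact hr
      set ι : H ⧸ K.subgroupOf H →* U ⧸ K.subgroupOf U :=
        QuotientGroup.map (K.subgroupOf H) (K.subgroupOf U) (Subgroup.inclusion hHU) hcond1
        with hιdef
      have hinj : Function.Injective ι := by
        intro a b
        induction a using QuotientGroup.induction_on with
        | H r =>
        induction b using QuotientGroup.induction_on with
        | H s =>
          intro hab
          rw [hιdef, QuotientGroup.map_mk, QuotientGroup.map_mk, QuotientGroup.eq] at hab
          rw [QuotientGroup.eq]
          rw [Subgroup.mem_subgroupOf] at hab ⊢
          simpa using hab
      have heq : ∀ (x : U ⧸ K.subgroupOf U) (m : H ⧸ K.subgroupOf H),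
          ι (α x m) = x * ι m * x⁻¹ := by
        intro x m
        induction x using QuotientGroup.induction_on with
        | H u =>
        induction m using QuotientGroup.induction_on with
        | H r =>
          rw [hαdef, QuotientGroup.lift_mk]
          show ι ((secAction H K (u : G)) (QuotientGroup.mk r)) = _
          rw [show (secAction H K (u : G)) (QuotientGroup.mk r)
              = QuotientGroup.mk (MulAut.conjNormal (u : G) r) from
            QuotientGroup.congr_mk _ _ _ (conj_map_subgroupOf H K (u : G)) r]
          rw [hιdef, QuotientGroup.map_mk, QuotientGroup.map_mk]
          rw [show ((QuotientGroup.mk u : U ⧸ K.subgroupOf U))⁻¹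
              = QuotientGroup.mk u⁻¹ from rfl]
          rw [show (QuotientGroup.mk u : U ⧸ K.subgroupOf U) *
              QuotientGroup.mk (Subgroup.inclusion hHU r) * QuotientGroup.mk u⁻¹
              = QuotientGroup.mk (u * Subgroup.inclusion hHU r * u⁻¹) from rfl]
          congr 1
      have hUq : F (U ⧸ K.subgroupOf U) := GroupClass.quot_mem hF hU _
      have hT' : F ((H ⧸ K.subgroupOf H) ⋊[α] (U ⧸ K.subgroupOf U)) :=
        GroupClass.sdp_mem hF α ι hinj heq hUq
      -- map it onto the semidirect product with G ⧸ C
      have hcond2 : K.subgroupOf U ≤ Subgroup.comap U.subtype C := by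
        intro u hu
        exact hKC (Subgroup.mem_subgroupOf.mp hu)
      set ρ : U ⧸ K.subgroupOf U →* G ⧸ C :=
        QuotientGroup.map (K.subgroupOf U) C U.subtype hcond2 with hρdef
      have hρs : Function.Surjective ρ := by
        intro x
        obtain ⟨u, hu⟩ := hsurjU x
        exact ⟨QuotientGroup.mk u, by rw [hρdef, QuotientGroup.map_mk]; exact hu⟩
      have hcompat : ∀ x : U ⧸ K.subgroupOf U,
          (SemidirectProduct.inl (N := H ⧸ K.subgroupOf H)
              (G := G ⧸ C) (φ := QuotientGroup.lift C (secAction H K) fun _ hx => hx)).comp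
            (MulEquiv.toMonoidHom (α x)) =
          (MulEquiv.toMonoidHom (MulAut.conj
              ((SemidirectProduct.inr).comp ρ x))).comp SemidirectProduct.inl := by
        intro x
        induction x using QuotientGroup.induction_on with
        | H u =>
          refine MonoidHom.ext fun m => ?_
          simp only [MonoidHom.comp_apply, MulEquiv.coe_toMonoidHom, MulAut.conj_apply]
          rw [← map_inv, ← SemidirectProduct.inl_aut]
          congr 1
      set θ := SemidirectProduct.lift
        (SemidirectProduct.inl (N := H ⧸ K.subgroupOf H) (G := G ⧸ C)
          (φ := QuotientGroup.lift C (secAction H K) fun _ hx => hx))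
        ((SemidirectProduct.inr).comp ρ) hcompat with hθdef
      have hθs : Function.Surjective θ := by
        intro x
        obtain ⟨y, hy⟩ := hρs x.right
        refine ⟨SemidirectProduct.inl x.left * SemidirectProduct.inr y, ?_⟩
        rw [map_mul, hθdef, SemidirectProduct.lift_inl, SemidirectProduct.lift_inr]
        rw [MonoidHom.comp_apply, hy]
        exact SemidirectProduct.inl_left_mul_inr_right x
      exact GroupClass.surj_mem hF θ hθs hT'
    · -- "nonabelian" case : H ⊓ C = K and H/K embeds into G ⧸ C
      have hHCK : H ⊓ C = K := by
        haveI : (H ⊓ C).Normal := by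
          constructor
          intro x hx g
          exact ⟨hHn.conj_mem x hx.1 g, (secCentralizer.normal H K).conj_mem x hx.2 g⟩
        rcases hchief (H ⊓ C) this (le_inf hKH.le hKC) inf_le_left with h | h
        · exact h
        · exact absurd (inf_eq_left.mp h) hHC
      haveI hKHn : (K.subgroupOf H).Normal := hKn.subgroupOf H
      have hcond3 : K.subgroupOf H ≤ Subgroup.comap H.subtype C := by
        intro r hr
        exact hKC (Subgroup.mem_subgroupOf.mp hr)
      set ι : H ⧸ K.subgroupOf H →* G ⧸ C :=
        QuotientGroup.map (K.subgroupOf H) C H.subtype hcond3 with hιdef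
      have hinj : Function.Injective ι := by
        intro a b
        induction a using QuotientGroup.induction_on with
        | H r =>
        induction b using QuotientGroup.induction_on with
        | H s =>
          intro hab
          rw [hιdef, QuotientGroup.map_mk, QuotientGroup.map_mk, QuotientGroup.eq] at hab
          rw [QuotientGroup.eq, Subgroup.mem_subgroupOf]
          have hmem : ((r⁻¹ * s : H) : G) ∈ H ⊓ C := ⟨(r⁻¹ * s : H).2, hab⟩
          rw [hHCK] at hmem
          exact hmem
      have heq : ∀ (x : G ⧸ C) (m : H ⧸ K.subgroupOf H),
          ι ((QuotientGroup.lift C (secAction H K) (fun _ hx => hx) x) m)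
            = x * ι m * x⁻¹ := by
        intro x m
        induction x using QuotientGroup.induction_on with
        | H g =>
        induction m using QuotientGroup.induction_on with
        | H r =>
          show ι ((secAction H K g) (QuotientGroup.mk r)) = _
          rw [show (secAction H K g) (QuotientGroup.mk r)
              = QuotientGroup.mk (MulAut.conjNormal g r) from
            QuotientGroup.congr_mk _ _ _ (conj_map_subgroupOf H K g) r]
          rw [hιdef, QuotientGroup.map_mk, QuotientGroup.map_mk]
          rw [show ((QuotientGroup.mk g : G ⧸ C))⁻¹ = QuotientGroup.mk g⁻¹ from rfl]
          rw [show (QuotientGroup.mk g : G ⧸ C) * QuotientGroup.mk (H.subtype r) *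
              QuotientGroup.mk g⁻¹ = QuotientGroup.mk (g * H.subtype r * g⁻¹) from rfl]
          congr 1
      exact GroupClass.sdp_mem hF _ ι hinj heq hGC
  -- conclude : Z ≤ FHypercentre F G
  rw [FHypercentre]
  exact le_iSup_of_le Z (le_iSup_of_le hmain le_rfl)
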